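/- Let H be a Hilbert space, d a closed densely defined operator on H with d² = 0 and range(d) closed, and suppose ker(d)/range(d) is finite-dimensional. Then the operator D = d + d* (with domain D(d) ∩ D(d*)) has finite-dimensional kernel ker(d) ∩ ker(d*) isomorphic to ker(d)/range(d), and D is Fredholm as an unbounded operator. -/

import Mathlib

open LinearPMap
open scoped RealInnerProductSpace

/-- Let `d` be a closed densely defined operator on a Hilbert space `H` with
`d² = 0` (range ⊆ kernel), closed range, and finite-dimensional cohomology `ker d / range d`.
Then `D = d + d*` (with domain `D(d) ∩ D(d*)`) has finite-dimensional kernel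
`ker d ∩ ker d*` isomorphic to `ker d / range d`, and `D` is Fredholm as an unbounded
operator: it has closed range, finite-dimensional kernel, and finite-dimensional cokernel. -/
theorem stmt11 {H : Type*} [NormedAddCommGroup H] [InnerProductSpace ℝ H] [CompleteSpace H]
    (d : H →ₗ.[ℝ] H) (hclosed : d.IsClosed) (hdense : Dense (d.domain : Set H))
    (K : Submodule ℝ H) (hK : K = (LinearMap.ker d.toFun).map d.domain.subtype)
    (Kadj : Submodule ℝ H)
    (hKadj : Kadj = (LinearMap.ker d.adjoint.toFun).map d.adjoint.domain.subtype)
    (R : Submodule ℝ H) (hR : R = LinearMap.range d.toFun)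
    -- d² = 0 : range d ⊆ ker d
    (hdd : R ≤ K)
    -- range d is closed, cohomology ker d / range d is finite dimensional
    (hRclosed : IsClosed (R : Set H))
    (hfin : FiniteDimensional ℝ (K ⧸ R.comap K.subtype))
    -- D = d + d*, whose domain is D(d) ∩ D(d*)
    (D : H →ₗ.[ℝ] H) (hD : D = d + d.adjoint) :
    (FiniteDimensional ℝ (K ⊓ Kadj : Submodule ℝ H) ∧
      Nonempty ((K ⊓ Kadj : Submodule ℝ H) ≃ₗ[ℝ] (K ⧸ R.comap K.subtype))) ∧
    ((LinearMap.ker D.toFun).map D.domain.subtype = K ⊓ Kadj) ∧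
    -- D is Fredholm
    (IsClosed ((LinearMap.range D.toFun : Submodule ℝ H) : Set H) ∧
      FiniteDimensional ℝ (LinearMap.ker D.toFun) ∧
      FiniteDimensional ℝ (H ⧸ LinearMap.range D.toFun)) := by
  subst hD
  set A := d.adjoint with hA
  -- membership characterizations
  have hKmem : ∀ x : H, x ∈ K ↔ ∃ hx : x ∈ d.domain, d ⟨x, hx⟩ = 0 := by
    intro x
    rw [hK]
    constructor
    · rintro ⟨⟨y, hy⟩, hyk, rfl⟩
      exact ⟨hy, hyk⟩
    · rintro ⟨hx, hdx⟩
      exact ⟨⟨x, hx⟩, hdx, rfl⟩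
  have hAmem : ∀ x : H, x ∈ Kadj ↔ ∃ hx : x ∈ A.domain, A ⟨x, hx⟩ = 0 := by
    intro x
    rw [hKadj]
    constructor
    · rintro ⟨⟨y, hy⟩, hyk, rfl⟩
      exact ⟨hy, hyk⟩
    · rintro ⟨hx, hdx⟩
      exact ⟨⟨x, hx⟩, hdx, rfl⟩
  have hRmem : ∀ x : H, x ∈ R ↔ ∃ v : d.domain, d v = x := by
    intro x; rw [hR]; exact LinearMap.mem_range
  have hadj : ∀ (x : A.domain) (y : d.domain), ⟪(A x : H), (y : H)⟫ = ⟪(x : H), d y⟫ :=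
    adjoint_isFormalAdjoint hdense
  -- K is closed
  have hKclosed : IsClosed (K : Set H) := by
    have h1 : ∀ x : H, x ∈ K ↔ (x, (0 : H)) ∈ d.graph := by
      intro x
      rw [hKmem, d.mem_graph_iff]
      constructor
      · rintro ⟨hx, hdx⟩; exact ⟨⟨x, hx⟩, rfl, hdx⟩
      · rintro ⟨⟨y, hy⟩, rfl, h2⟩; exact ⟨hy, h2⟩
    have h2 : (K : Set H) = (fun x : H => (x, (0 : H))) ⁻¹' (d.graph : Set (H × H)) :=
      Set.ext fun x => h1 x
    rw [h2]
    exact hclosed.preimage (continuous_id.prodMk continuous_const)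
  haveI : CompleteSpace R := hRclosed.completeSpace_coe
  haveI : CompleteSpace K := hKclosed.completeSpace_coe
  -- Kadj = Rᗮ
  have hKadjR : Kadj = Rᗮ := by
    ext y
    rw [hAmem, Submodule.mem_orthogonal]
    constructor
    · rintro ⟨hy, hAy⟩ u hu
      obtain ⟨v, rfl⟩ := (hRmem u).1 hu
      have h := hadj ⟨y, hy⟩ v
      rw [hAy, inner_zero_left] at h
      rw [real_inner_comm]
      exact h.symm
    · intro hy
      have key : ∀ x : d.domain, ⟪(0 : H), (x : H)⟫ = ⟪y, d x⟫ := by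
        intro x
        rw [inner_zero_left, real_inner_comm]
        exact (hy _ ((hRmem _).2 ⟨x, rfl⟩)).symm
      have hmem : y ∈ A.domain := mem_adjoint_domain_of_exists y ⟨0, key⟩
      exact ⟨hmem, adjoint_apply_eq hdense ⟨y, hmem⟩ key⟩
  have hKadjclosed : IsClosed (Kadj : Set H) := by
    rw [hKadjR]; exact Submodule.isClosed_orthogonal R
  haveI : CompleteSpace Kadj := hKadjclosed.completeSpace_coe
  have hRorth : Kadjᗮ = R := by
    rw [hKadjR]; exact Submodule.orthogonal_orthogonal R
  -- the harmonic space ≅ cohomology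
  have hHfin : FiniteDimensional ℝ (K ⊓ Kadj : Submodule ℝ H) ∧
      Nonempty ((K ⊓ Kadj : Submodule ℝ H) ≃ₗ[ℝ] (K ⧸ R.comap K.subtype)) := by
    let f : (K ⊓ Kadj : Submodule ℝ H) →ₗ[ℝ] (K ⧸ R.comap K.subtype) :=
      (R.comap K.subtype).mkQ.comp (Submodule.inclusion inf_le_left)
    have hinj : Function.Injective f := by
      rw [← LinearMap.ker_eq_bot, LinearMap.ker_eq_bot']
      intro x hx
      have h1 : (x : H) ∈ R := by
        have := (Submodule.Quotient.mk_eq_zero _).1 hx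
        exact this
      have h2 : (x : H) ∈ Rᗮ := hKadjR ▸ x.2.2
      have : (x : H) = 0 := by
        have := h2 _ h1
        rwa [real_inner_self_eq_norm_sq, pow_eq_zero_iff (by norm_num), norm_eq_zero] at this
      exact Subtype.ext this
    have hsurj : Function.Surjective f := by
      intro q
      obtain ⟨k, rfl⟩ := Submodule.mkQ_surjective _ q
      set p := Submodule.orthogonalProjectionOnto R (k : H) with hp
      have h1 : (k : H) - (p : H) ∈ Rᗮ := Submodule.sub_starProjection_mem_orthogonal (k : H)
      have h2 : (k : H) - (p : H) ∈ K := K.sub_mem k.2 (hdd p.2)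
      refine ⟨⟨(k : H) - (p : H), h2, hKadjR ▸ h1⟩, ?_⟩
      show Submodule.Quotient.mk _ = Submodule.Quotient.mk k
      rw [Submodule.Quotient.eq, Submodule.mem_comap]
      show ((k : H) - (p : H)) - (k : H) ∈ R
      simpa using R.neg_mem p.2
    let e := LinearEquiv.ofBijective f ⟨hinj, hsurj⟩
    exact ⟨e.symm.finiteDimensional, ⟨e⟩⟩
  -- kernel of D
  have hker : (LinearMap.ker (d + A).toFun).map (d + A).domain.subtype = K ⊓ Kadj := by
    ext x
    simp only [Submodule.mem_map, LinearMap.mem_ker, Submodule.mem_inf]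
    constructor
    · rintro ⟨⟨y, hy⟩, hy0, rfl⟩
      obtain ⟨hy1, hy2⟩ : y ∈ d.domain ∧ y ∈ A.domain := hy
      have happ : d ⟨y, hy1⟩ + A ⟨y, hy2⟩ = 0 := hy0
      set a := d ⟨y, hy1⟩ with ha
      set b := A ⟨y, hy2⟩ with hb
      have haR : a ∈ R := (hRmem a).2 ⟨_, rfl⟩
      obtain ⟨ha1, ha2⟩ := (hKmem a).1 (hdd haR)
      have hab : ⟪a, b⟫ = 0 := by
        have h := hadj ⟨y, hy2⟩ ⟨a, ha1⟩
        rw [ha2, inner_zero_right] at h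
        rw [real_inner_comm]
        exact h
      have hbeq : b = -a := eq_neg_of_add_eq_zero_right happ
      have ha0 : a = 0 := by
        rw [hbeq, inner_neg_right, neg_eq_zero, real_inner_self_eq_norm_sq] at hab
        rwa [pow_eq_zero_iff (by norm_num), norm_eq_zero] at hab
      have hb0 : b = 0 := by rw [hbeq, ha0, neg_zero]
      exact ⟨(hKmem y).2 ⟨hy1, ha0⟩, (hAmem y).2 ⟨hy2, hb0⟩⟩
    · rintro ⟨hxK, hxA⟩
      obtain ⟨h1, e1⟩ := (hKmem x).1 hxK
      obtain ⟨h2, e2⟩ := (hAmem x).1 hxA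
      refine ⟨⟨x, ⟨h1, h2⟩⟩, ?_, rfl⟩
      show d ⟨x, h1⟩ + A ⟨x, h2⟩ = 0
      rw [e1, e2, add_zero]
  -- closed range theorem step
  have hCRT : ∀ y : H, y ∈ Kᗮ → ∃ z : H, ∃ hz : z ∈ A.domain, A ⟨z, hz⟩ = y := by
    intro y hy
    haveI : CompleteSpace d.graph := hclosed.completeSpace_coe
    have hsnd : ∀ g : d.graph, (g : H × H).2 ∈ R := by
      rintro ⟨g, hg⟩
      rw [d.mem_graph_iff] at hg
      obtain ⟨v, _, h2⟩ := hg
      exact (hRmem _).2 ⟨v, h2⟩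
    let π₀ : d.graph →ₗ[ℝ] R :=
      LinearMap.codRestrict R ((LinearMap.snd ℝ H H).comp d.graph.subtype) hsnd
    have hπcont : Continuous π₀ :=
      (continuous_snd.comp continuous_subtype_val).subtype_mk _
    let π : d.graph →L[ℝ] R := ⟨π₀, hπcont⟩
    have hπsurj : Function.Surjective π₀ := by
      rintro ⟨r, hr⟩
      obtain ⟨v, hv⟩ := (hRmem r).1 hr
      exact ⟨⟨((v : H), d v), d.mem_graph v⟩, Subtype.ext hv⟩
    obtain ⟨C, hC0, hCb⟩ := ContinuousLinearMap.exists_preimage_norm_le π hπsurj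
    let φ' : d.graph →L[ℝ] ℝ :=
      (innerSL ℝ y).comp ((ContinuousLinearMap.fst ℝ H H).comp d.graph.subtypeL)
    have hφ'app : ∀ g : d.graph, φ' g = ⟪y, (g : H × H).1⟫ := fun g => rfl
    have hker_le : LinearMap.ker π₀ ≤ LinearMap.ker (φ' : d.graph →ₗ[ℝ] ℝ) := by
      rintro ⟨g, hg⟩ hg0
      have h2 : g.2 = 0 := congrArg Subtype.val hg0
      rw [d.mem_graph_iff] at hg
      obtain ⟨v, hv1, hv2⟩ := hg
      have hdv : d v = 0 := by rw [hv2, h2]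
      have hgK : g.1 ∈ K := by
        rw [← hv1]
        exact (hKmem _).2 ⟨v.2, hdv⟩
      show ⟪y, g.1⟫ = 0
      rw [real_inner_comm]
      exact hy _ hgK
    let e := π₀.quotKerEquivOfSurjective hπsurj
    let φq : (d.graph ⧸ LinearMap.ker π₀) →ₗ[ℝ] ℝ :=
      (LinearMap.ker π₀).liftQ (φ' : d.graph →ₗ[ℝ] ℝ) hker_le
    let φ₀ : R →ₗ[ℝ] ℝ := φq.comp (e.symm : R →ₗ[ℝ] (d.graph ⧸ LinearMap.ker π₀))
    have hφ₀ : ∀ g : d.graph, φ₀ (π₀ g) = φ' g := by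
      intro g
      have h1 : e.symm (π₀ g) = Submodule.Quotient.mk g := by
        apply e.injective
        rw [e.apply_symm_apply]
        rfl
      show φq (e.symm (π₀ g)) = φ' g
      rw [h1]
      rfl
    have hbound : ∀ r : R, ‖φ₀ r‖ ≤ (C * ‖φ'‖) * ‖r‖ := by
      intro r
      obtain ⟨g, hg, hgn⟩ := hCb r
      have h1 : φ₀ r = φ' g := by rw [← hg]; exact hφ₀ g
      rw [h1]
      calc ‖φ' g‖ ≤ ‖φ'‖ * ‖g‖ := φ'.le_opNorm g
        _ ≤ ‖φ'‖ * (C * ‖r‖) := mul_le_mul_of_nonneg_left hgn (norm_nonneg φ')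
        _ = (C * ‖φ'‖) * ‖r‖ := by ring
    let φ : R →L[ℝ] ℝ := φ₀.mkContinuous _ hbound
    let ψ : H →L[ℝ] ℝ := φ.comp (Submodule.orthogonalProjectionOnto R)
    let z : H := (InnerProductSpace.toDual ℝ H).symm ψ
    have hz : ∀ x : d.domain, ⟪y, (x : H)⟫ = ⟪z, d x⟫ := by
      intro x
      have h1 : ⟪z, d x⟫ = ψ (d x) := InnerProductSpace.toDual_symm_apply
      have hdm : d x ∈ R := (hRmem _).2 ⟨x, rfl⟩
      have h2 : Submodule.orthogonalProjectionOnto R (d x) = ⟨d x, hdm⟩ :=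
        Submodule.orthogonalProjection_mem_subspace_eq_self (⟨d x, hdm⟩ : R)
      have h3 : ψ (d x) = φ₀ ⟨d x, hdm⟩ := by
        show φ (Submodule.orthogonalProjectionOnto R (d x)) = φ₀ ⟨d x, hdm⟩
        rw [h2]
        rfl
      have h4 : π₀ ⟨((x : H), d x), d.mem_graph x⟩ = ⟨d x, hdm⟩ := rfl
      have h5 : φ₀ ⟨d x, hdm⟩ = ⟪y, (x : H)⟫ := by
        rw [← h4, hφ₀]
        rfl
      rw [h1, h3, h5]
    have hzdom : z ∈ A.domain := mem_adjoint_domain_of_exists z ⟨y, hz⟩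
    exact ⟨z, hzdom, adjoint_apply_eq hdense ⟨z, hzdom⟩ hz⟩
  -- range of D
  have hrange : LinearMap.range (d + A).toFun = (K ⊓ Kadj)ᗮ := by
    ext y
    constructor
    · rintro ⟨x, rfl⟩
      rw [Submodule.mem_orthogonal]
      rintro u ⟨huK, huA⟩
      obtain ⟨hu1, hu2⟩ := (hKmem u).1 huK
      obtain ⟨hu3, hu4⟩ := (hAmem u).1 huA
      obtain ⟨hx1, hx2⟩ : (x : H) ∈ d.domain ∧ (x : H) ∈ A.domain := x.2
      have happ : (d + A).toFun x = d ⟨x, hx1⟩ + A ⟨x, hx2⟩ := rfl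
      rw [happ, inner_add_right]
      have e1 : ⟪u, d ⟨(x : H), hx1⟩⟫ = 0 := by
        have h := hadj ⟨u, hu3⟩ ⟨x, hx1⟩
        rw [hu4, inner_zero_left] at h
        exact h.symm
      have e2 : ⟪u, A ⟨(x : H), hx2⟩⟫ = 0 := by
        have h := hadj ⟨x, hx2⟩ ⟨u, hu1⟩
        rw [hu2, inner_zero_right] at h
        rw [real_inner_comm]
        exact h
      rw [e1, e2, add_zero]
    · intro hy
      set k : H := (Submodule.orthogonalProjectionOnto K y : H) with hk
      have hkK : k ∈ K := (Submodule.orthogonalProjectionOnto K y).2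
      have hyk : y - k ∈ Kᗮ := Submodule.sub_starProjection_mem_orthogonal y
      set p : H := (Submodule.orthogonalProjectionOnto R k : H) with hp
      have hkp : k - p ∈ Rᗮ := Submodule.sub_starProjection_mem_orthogonal k
      have hkpK : k - p ∈ K := K.sub_mem hkK (hdd (Submodule.orthogonalProjectionOnto R k).2)
      have hkorth : k ∈ (K ⊓ Kadj)ᗮ := by
        have h1 : y - k ∈ (K ⊓ Kadj)ᗮ := Submodule.orthogonal_le inf_le_left hyk
        have h2 : k = y - (y - k) := (sub_sub_cancel y k).symm
        rw [h2]
        exact Submodule.sub_mem _ hy h1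
      have hkp0 : k - p = 0 := by
        have hkpH : k - p ∈ K ⊓ Kadj := ⟨hkpK, hKadjR ▸ hkp⟩
        have h1 : ⟪k - p, k⟫ = 0 := ((Submodule.mem_orthogonal _ _).1 hkorth) _ hkpH
        have h2 : ⟪k - p, p⟫ = 0 := by
          rw [real_inner_comm]
          exact ((Submodule.mem_orthogonal _ _).1 hkp) _ (Submodule.orthogonalProjectionOnto R k).2
        have h3 : ⟪k - p, k - p⟫ = 0 := by rw [inner_sub_right, h1, h2, sub_zero]
        exact inner_self_eq_zero.mp h3
      have hkR : k ∈ R := by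
        have h : k = p := sub_eq_zero.mp hkp0
        rw [h]
        exact (Submodule.orthogonalProjectionOnto R k).2
      -- k is in the range of D
      obtain ⟨v, hv⟩ := (hRmem k).1 hkR
      set q : H := (Submodule.orthogonalProjectionOnto K (v : H) : H) with hq
      have hvq : (v : H) - q ∈ Kᗮ := Submodule.sub_starProjection_mem_orthogonal (v : H)
      obtain ⟨hq1, hq2⟩ := (hKmem q).1 (Submodule.orthogonalProjectionOnto K (v : H)).2
      have hv1 : (v : H) - q ∈ d.domain := Submodule.sub_mem _ v.2 hq1
      have hd1 : d ⟨(v : H) - q, hv1⟩ = k := by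
        have h : (⟨(v : H) - q, hv1⟩ : d.domain) = v - ⟨q, hq1⟩ := rfl
        rw [h, d.map_sub, hv, hq2, sub_zero]
      obtain ⟨hv2', hv2e⟩ := (hAmem _).1
        (show (v : H) - q ∈ Kadj by rw [hKadjR]; exact Submodule.orthogonal_le hdd hvq)
      have hkrange : k ∈ LinearMap.range (d + A).toFun := by
        refine ⟨⟨(v : H) - q, ⟨hv1, hv2'⟩⟩, ?_⟩
        show d ⟨(v : H) - q, hv1⟩ + A ⟨(v : H) - q, hv2'⟩ = k
        rw [hd1, hv2e, add_zero]
      -- y - k is in the range of D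
      obtain ⟨z, hz1, hz2⟩ := hCRT (y - k) hyk
      set w : H := (Submodule.orthogonalProjectionOnto Kadj z : H) with hw
      obtain ⟨hw1, hw2⟩ := (hAmem w).1 (Submodule.orthogonalProjectionOnto Kadj z).2
      have hzw : z - w ∈ A.domain := Submodule.sub_mem _ hz1 hw1
      have hA1 : A ⟨z - w, hzw⟩ = y - k := by
        have h : (⟨z - w, hzw⟩ : A.domain) = ⟨z, hz1⟩ - ⟨w, hw1⟩ := rfl
        rw [h, A.map_sub, hz2, hw2, sub_zero]
      have hzwR : z - w ∈ R := by
        rw [← hRorth]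
        exact Submodule.sub_starProjection_mem_orthogonal z
      obtain ⟨hz3, hz4⟩ := (hKmem _).1 (hdd hzwR)
      have hykrange : y - k ∈ LinearMap.range (d + A).toFun := by
        refine ⟨⟨z - w, ⟨hz3, hzw⟩⟩, ?_⟩
        show d ⟨z - w, hz3⟩ + A ⟨z - w, hzw⟩ = y - k
        rw [hz4, hA1, zero_add]
      have hsum := Submodule.add_mem _ hkrange hykrange
      have hyy : k + (y - k) = y := by abel
      rwa [hyy] at hsum
  -- assembly
  refine ⟨hHfin, hker, ?_, ?_, ?_⟩
  · rw [hrange]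
    exact Submodule.isClosed_orthogonal _
  · haveI := hHfin.1
    have e2 := Submodule.equivMapOfInjective (d + A).domain.subtype
      (Submodule.injective_subtype _) (LinearMap.ker (d + A).toFun)
    rw [hker] at e2
    exact e2.symm.finiteDimensional
  · rw [hrange]
    haveI : CompleteSpace (K ⊓ Kadj : Submodule ℝ H) := by
      have hcl : IsClosed ((K ⊓ Kadj : Submodule ℝ H) : Set H) := by
        rw [Submodule.coe_inf]
        exact hKclosed.inter hKadjclosed
      exact hcl.completeSpace_coe
    have hic : IsCompl (K ⊓ Kadj : Submodule ℝ H) (K ⊓ Kadj)ᗮ :=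
      Submodule.isCompl_orthogonal _
    haveI := hHfin.1
    exact (Submodule.quotientEquivOfIsCompl _ _ hic.symm).symm.finiteDimensional
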